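/- Let κ > 0, T > 0, and let m₁, n₁, m₂, n₂ ∈ ℤ. Let h₁, h₂ : [0, π] × [0, T) → ℝ be continuous on [0, π] × [0, T) and twice continuously differentiable on (0, π) × (0, T), with boundary values hᵢ(0, t) = mᵢπ and hᵢ(π, t) = nᵢπ for all t ∈ [0, T) (i = 1, 2). Suppose h₁ satisfies ∂ₜh₁ = ∂θθh₁ + (cos θ / sin θ)·∂θh₁ − sin(2h₁)/(2 sin²θ) − (κ/2)·sin(2h₁ − 2θ) on (0, π) × (0, T), and h₂ satisfies the corresponding differential inequality ∂ₜh₂ ≥ ∂θθh₂ + (cos θ / sin θ)·∂θh₂ − sin(2h₂)/(2 sin²θ) − (κ/2)·sin(2h₂ − 2θ) on (0, π) × (0, T). If h₁(θ, 0) ≤ h₂(θ, 0) for all θ ∈ [0, π], then h₁(θ, t) ≤ h₂(θ, t) for all (θ, t) ∈ [0, π] × (0, T). -/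

import Mathlib

open Real Set Filter Topology

set_option maxHeartbeats 2000000

lemma aux_deriv_nonpos_left {ψ : ℝ → ℝ} {t d : ℝ} (hd : HasDerivAt ψ d t)
    (hpos : ∀ s ∈ Set.Ico (0:ℝ) t, 0 ≤ ψ s) (h0 : ψ t = 0) (ht : 0 < t) : d ≤ 0 := by
  have hs := hasDerivAt_iff_tendsto_slope.1 hd
  have hs' : Tendsto (slope ψ t) (𝓝[<] t) (𝓝 d) :=
    hs.mono_left (nhdsWithin_mono _ (fun x hx => ne_of_lt hx))
  refine le_of_tendsto hs' ?_
  have h1 : ∀ᶠ x in 𝓝[<] t, x ∈ Set.Iio t := self_mem_nhdsWithin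
  have h2 : ∀ᶠ x in 𝓝[<] t, x ∈ Set.Ioi (0:ℝ) :=
    eventually_nhdsWithin_of_eventually_nhds (Ioi_mem_nhds ht)
  filter_upwards [h1, h2] with x hx1 hx2
  have hx : x ∈ Set.Ico (0:ℝ) t := ⟨le_of_lt hx2, hx1⟩
  rw [slope_def_field, h0, sub_zero]
  exact div_nonpos_of_nonneg_of_nonpos (hpos x hx) (by simp at hx1; linarith)

lemma aux_second_deriv_nonneg {g : ℝ → ℝ} {a : ℝ}
    (hdiff : ∀ᶠ x in 𝓝 a, DifferentiableAt ℝ g x)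
    (hdiff2 : DifferentiableAt ℝ (deriv g) a)
    (hmin : IsLocalMin g a) : 0 ≤ deriv (deriv g) a := by
  by_contra hk
  push_neg at hk
  have h0 : deriv g a = 0 := hmin.deriv_eq_zero
  have hslope : Tendsto (slope (deriv g) a) (𝓝[≠] a) (𝓝 (deriv (deriv g) a)) :=
    hasDerivAt_iff_tendsto_slope.1 hdiff2.hasDerivAt
  have hev : ∀ᶠ x in 𝓝[≠] a, slope (deriv g) a x < 0 :=
    hslope.eventually (Iio_mem_nhds hk)
  rw [eventually_nhdsWithin_iff] at hev
  have hall : ∀ᶠ x in 𝓝 a, (x ≠ a → slope (deriv g) a x < 0) ∧ g a ≤ g x ∧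
      DifferentiableAt ℝ g x := hev.and (hmin.and hdiff)
  obtain ⟨r, hr, H⟩ := Metric.eventually_nhds_iff.1 hall
  set b := a + r/2 with hb
  have hab : a < b := by simp [hb]; linarith
  have hmem : ∀ x ∈ Set.Icc a b, dist x a < r := by
    intro x hx
    have hx2 : x ≤ a + r/2 := hx.2
    have hx1 : a ≤ x := hx.1
    rw [Real.dist_eq, abs_lt]
    constructor <;> linarith
  have hcont : ContinuousOn g (Set.Icc a b) := fun x hx =>
    ((H (hmem x hx)).2.2).continuousAt.continuousWithinAt
  have hderneg : ∀ x ∈ interior (Set.Icc a b), deriv g x < 0 := by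
    intro x hx
    rw [interior_Icc] at hx
    have hxr := hmem x ⟨hx.1.le, hx.2.le⟩
    have hxne : x ≠ a := ne_of_gt hx.1
    have hsl := (H hxr).1 hxne
    rw [slope_def_field, h0, sub_zero] at hsl
    have hxa : 0 < x - a := by linarith [hx.1]
    exact (div_neg_iff.1 hsl).elim (fun h => absurd h.2 (by linarith)) (fun h => h.1)
  have hanti : StrictAntiOn g (Set.Icc a b) :=
    strictAntiOn_of_deriv_neg (convex_Icc a b) hcont hderneg
  have hlt : g b < g a := hanti ⟨le_refl a, hab.le⟩ ⟨hab.le, le_refl b⟩ hab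
  have hge : g a ≤ g b := (H (hmem b ⟨hab.le, le_refl b⟩)).2.1
  linarith


/-- Comparison principle for the axisymmetric skyrmionic map heat flow:
    if h₁ is a solution and h₂ is a supersolution of the profile heat equation,
    with ordered initial data, then they stay ordered for all times. -/
theorem comparison_principle_profiles
    (κ T : ℝ) (hκ : 0 < κ) (hT : 0 < T)
    (m₁ n₁ m₂ n₂ : ℤ) (h₁ h₂ : ℝ → ℝ → ℝ)
    -- continuity on [0,π] × [0,T)
    (hcont₁ : ContinuousOn (Function.uncurry h₁) (Set.Icc 0 π ×ˢ Set.Ico 0 T))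
    (hcont₂ : ContinuousOn (Function.uncurry h₂) (Set.Icc 0 π ×ˢ Set.Ico 0 T))
    -- twice continuous differentiability on (0,π) × (0,T)
    (hC2₁ : ContDiffOn ℝ 2 (Function.uncurry h₁) (Set.Ioo 0 π ×ˢ Set.Ioo 0 T))
    (hC2₂ : ContDiffOn ℝ 2 (Function.uncurry h₂) (Set.Ioo 0 π ×ˢ Set.Ioo 0 T))
    -- boundary values
    (hbd₁0 : ∀ t ∈ Set.Ico (0 : ℝ) T, h₁ 0 t = (m₁ : ℝ) * π)
    (hbd₁π : ∀ t ∈ Set.Ico (0 : ℝ) T, h₁ π t = (n₁ : ℝ) * π)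
    (hbd₂0 : ∀ t ∈ Set.Ico (0 : ℝ) T, h₂ 0 t = (m₂ : ℝ) * π)
    (hbd₂π : ∀ t ∈ Set.Ico (0 : ℝ) T, h₂ π t = (n₂ : ℝ) * π)
    -- h₁ solves the profile heat equation
    (heq : ∀ θ ∈ Set.Ioo (0 : ℝ) π, ∀ t ∈ Set.Ioo (0 : ℝ) T,
      deriv (fun s => h₁ θ s) t =
        deriv (deriv (fun x => h₁ x t)) θ
        + (Real.cos θ / Real.sin θ) * deriv (fun x => h₁ x t) θ
        - Real.sin (2 * h₁ θ t) / (2 * Real.sin θ ^ 2)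
        - (κ / 2) * Real.sin (2 * h₁ θ t - 2 * θ))
    -- h₂ is a supersolution
    (hineq : ∀ θ ∈ Set.Ioo (0 : ℝ) π, ∀ t ∈ Set.Ioo (0 : ℝ) T,
      deriv (fun s => h₂ θ s) t ≥
        deriv (deriv (fun x => h₂ x t)) θ
        + (Real.cos θ / Real.sin θ) * deriv (fun x => h₂ x t) θ
        - Real.sin (2 * h₂ θ t) / (2 * Real.sin θ ^ 2)
        - (κ / 2) * Real.sin (2 * h₂ θ t - 2 * θ))
    -- ordered initial data
    (hinit : ∀ θ ∈ Set.Icc (0 : ℝ) π, h₁ θ 0 ≤ h₂ θ 0) :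
    ∀ θ ∈ Set.Icc (0 : ℝ) π, ∀ t ∈ Set.Ioo (0 : ℝ) T, h₁ θ t ≤ h₂ θ t := by
  have key : ∀ t₀ ∈ Set.Ioo (0:ℝ) T, ∀ p ∈ Set.Icc (0:ℝ) π ×ˢ Set.Icc (0:ℝ) t₀,
      0 ≤ h₂ p.1 p.2 - h₁ p.1 p.2 := by
    intro t₀ ht₀
    set K : Set (ℝ × ℝ) := Set.Icc (0:ℝ) π ×ˢ Set.Icc (0:ℝ) t₀ with hK
    have hKsub : K ⊆ Set.Icc 0 π ×ˢ Set.Ico 0 T := by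
      intro p hp
      exact ⟨hp.1, hp.2.1, lt_of_le_of_lt hp.2.2 ht₀.2⟩
    have hKcomp : IsCompact K := isCompact_Icc.prod isCompact_Icc
    have hKclosed : IsClosed K := isClosed_Icc.prod isClosed_Icc
    have hWc : ContinuousOn (fun p : ℝ × ℝ => h₂ p.1 p.2 - h₁ p.1 p.2) K :=
      (hcont₂.mono hKsub).sub (hcont₁.mono hKsub)
    have hSc : ContinuousOn (fun p : ℝ × ℝ => h₁ p.1 p.2 + h₂ p.1 p.2) K :=
      (hcont₁.mono hKsub).add (hcont₂.mono hKsub)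
    have hpis : (0:ℝ) < π := Real.pi_pos
    have h0T : (0:ℝ) ∈ Set.Ico (0:ℝ) T := ⟨le_refl 0, hT⟩
    have hm : (m₁:ℝ) * π ≤ (m₂:ℝ) * π := by
      have := hinit 0 ⟨le_refl 0, hpis.le⟩
      rw [hbd₁0 0 h0T, hbd₂0 0 h0T] at this
      exact this
    have hn : (n₁:ℝ) * π ≤ (n₂:ℝ) * π := by
      have := hinit π ⟨hpis.le, le_refl π⟩
      rw [hbd₁π 0 h0T, hbd₂π 0 h0T] at this
      exact this
    -- time coordinates of K lie in [0,T)
    have hKt : ∀ p : ℝ × ℝ, p ∈ K → p.2 ∈ Set.Ico (0:ℝ) T :=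
      fun p hp => ⟨hp.2.1, lt_of_le_of_lt hp.2.2 ht₀.2⟩
    -- edge facts
    have hedge : ∀ p : ℝ × ℝ, p ∈ K → (p.1 = 0 ∨ p.1 = π) →
        0 ≤ h₂ p.1 p.2 - h₁ p.1 p.2 ∧
        (h₂ p.1 p.2 - h₁ p.1 p.2 ≤ 0 → Real.cos (h₁ p.1 p.2 + h₂ p.1 p.2) = 1) := by
      intro p hp hcase
      have hpt := hKt p hp
      rcases hcase with h0 | hπ
      · rw [h0, hbd₁0 p.2 hpt, hbd₂0 p.2 hpt]
        refine ⟨by linarith, fun hle => ?_⟩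
        have hmeq : (m₂:ℝ) * π = (m₁:ℝ) * π := by linarith
        have : (m₁:ℝ) * π + (m₂:ℝ) * π = (m₁:ℝ) * (2 * π) := by linarith
        rw [this]
        exact Real.cos_int_mul_two_pi m₁
      · rw [hπ, hbd₁π p.2 hpt, hbd₂π p.2 hpt]
        refine ⟨by linarith, fun hle => ?_⟩
        have hneq : (n₂:ℝ) * π = (n₁:ℝ) * π := by linarith
        have : (n₁:ℝ) * π + (n₂:ℝ) * π = (n₁:ℝ) * (2 * π) := by linarith
        rw [this]
        exact Real.cos_int_mul_two_pi n₁
    -- the "bad set"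
    set B : Set (ℝ × ℝ) := {p | p ∈ K ∧ h₂ p.1 p.2 - h₁ p.1 p.2 ≤ 0 ∧
      (Real.cos (h₁ p.1 p.2 + h₂ p.1 p.2) ≤ 0 ∨ h₂ p.1 p.2 - h₁ p.1 p.2 ≤ -1)} with hBdef
    have hBθ : ∀ p ∈ B, 0 < p.1 ∧ p.1 < π := by
      intro p hp
      obtain ⟨hpK, hWle, hcos⟩ := hp
      have h1 : p.1 ∈ Set.Icc (0:ℝ) π := hpK.1
      constructor
      · rcases lt_or_eq_of_le h1.1 with h | h
        · exact h
        · exfalso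
          obtain ⟨hge, hcos1⟩ := hedge p hpK (Or.inl h.symm)
          have := hcos1 hWle
          rcases hcos with hc | hc
          · rw [this] at hc; linarith
          · linarith
      · rcases lt_or_eq_of_le h1.2 with h | h
        · exact h
        · exfalso
          obtain ⟨hge, hcos1⟩ := hedge p hpK (Or.inr h)
          have := hcos1 hWle
          rcases hcos with hc | hc
          · rw [this] at hc; linarith
          · linarith
    have hBclosed : IsClosed B := by
      have hc1 : IsClosed (K ∩ (fun p : ℝ × ℝ => h₂ p.1 p.2 - h₁ p.1 p.2) ⁻¹' Set.Iic 0) :=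
        hWc.preimage_isClosed_of_isClosed hKclosed isClosed_Iic
      have hc2 : IsClosed (K ∩ (fun p : ℝ × ℝ => Real.cos (h₁ p.1 p.2 + h₂ p.1 p.2)) ⁻¹' Set.Iic 0) :=
        (Real.continuous_cos.comp_continuousOn hSc).preimage_isClosed_of_isClosed hKclosed isClosed_Iic
      have hc3 : IsClosed (K ∩ (fun p : ℝ × ℝ => h₂ p.1 p.2 - h₁ p.1 p.2) ⁻¹' Set.Iic (-1)) :=
        hWc.preimage_isClosed_of_isClosed hKclosed isClosed_Iic
      have hBeq : B = (K ∩ (fun p : ℝ × ℝ => h₂ p.1 p.2 - h₁ p.1 p.2) ⁻¹' Set.Iic 0) ∩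
          ((K ∩ (fun p : ℝ × ℝ => Real.cos (h₁ p.1 p.2 + h₂ p.1 p.2)) ⁻¹' Set.Iic 0) ∪
           (K ∩ (fun p : ℝ × ℝ => h₂ p.1 p.2 - h₁ p.1 p.2) ⁻¹' Set.Iic (-1))) := by
        ext q
        simp only [hBdef, Set.mem_setOf_eq, Set.mem_inter_iff, Set.mem_union,
          Set.mem_preimage, Set.mem_Iic]
        tauto
      rw [hBeq]
      exact (hc1.inter (hc2.union hc3))
    have hBsub : B ⊆ K := fun p hp => hp.1
    have hBcomp : IsCompact B := hKcomp.of_isClosed_subset hBclosed hBsub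
    obtain ⟨lam, hlamκ, hlamB⟩ : ∃ lam, κ ≤ lam ∧
        ∀ p ∈ B, 1 / (Real.sin p.1) ^ 2 + κ ≤ lam := by
      rcases B.eq_empty_or_nonempty with hBe | hBne
      · exact ⟨κ, le_refl κ, by simp [hBe]⟩
      · have hsinpos : ∀ p ∈ B, 0 < Real.sin p.1 := fun p hp =>
          Real.sin_pos_of_pos_of_lt_pi (hBθ p hp).1 (hBθ p hp).2
        have hcont : ContinuousOn (fun p : ℝ × ℝ => 1 / (Real.sin p.1) ^ 2 + κ) B := by
          refine ContinuousOn.add ?_ continuousOn_const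
          refine ContinuousOn.div continuousOn_const ?_ ?_
          · exact ((Real.continuous_sin.comp continuous_fst).continuousOn).pow 2
          · intro p hp
            exact pow_ne_zero 2 (ne_of_gt (hsinpos p hp))
        obtain ⟨q, hqB, hq⟩ := hBcomp.exists_isMaxOn hBne hcont
        refine ⟨max κ (1 / (Real.sin q.1) ^ 2 + κ), le_max_left _ _, fun p hp => ?_⟩
        exact le_trans (hq hp) (le_max_right _ _)
    -- main positivity claim
    have main : ∀ ε > (0:ℝ), ∀ p ∈ K,
        0 < Real.exp (-lam * p.2) * (h₂ p.1 p.2 - h₁ p.1 p.2) + ε * (p.2 + 1) := by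
      intro ε hε
      by_contra hcon
      push_neg at hcon
      obtain ⟨pbad, hpbadK, hpbadF⟩ := hcon
      have hFc : ContinuousOn (fun q : ℝ × ℝ =>
          Real.exp (-lam * q.2) * (h₂ q.1 q.2 - h₁ q.1 q.2) + ε * (q.2 + 1)) K := by
        refine ContinuousOn.add (ContinuousOn.mul ?_ hWc) ?_
        · exact (Real.continuous_exp.comp (continuous_const.mul continuous_snd)).continuousOn
        · exact (continuous_const.mul (continuous_snd.add continuous_const)).continuousOn
      set A : Set (ℝ × ℝ) := {q | q ∈ K ∧
        Real.exp (-lam * q.2) * (h₂ q.1 q.2 - h₁ q.1 q.2) + ε * (q.2 + 1) ≤ 0} with hAdef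
      have hAne : A.Nonempty := ⟨pbad, hpbadK, hpbadF⟩
      have hAeq : A = K ∩ (fun q : ℝ × ℝ =>
          Real.exp (-lam * q.2) * (h₂ q.1 q.2 - h₁ q.1 q.2) + ε * (q.2 + 1)) ⁻¹' Set.Iic 0 := by
        ext q
        simp only [hAdef, Set.mem_setOf_eq, Set.mem_inter_iff, Set.mem_preimage, Set.mem_Iic]
      have hAclosed : IsClosed A :=
        hAeq ▸ hFc.preimage_isClosed_of_isClosed hKclosed isClosed_Iic
      have hAcomp : IsCompact A := hKcomp.of_isClosed_subset hAclosed (fun q hq => hq.1)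
      obtain ⟨⟨θs, ts⟩, hq₀A, hq₀min⟩ :=
        hAcomp.exists_isMinOn hAne continuous_snd.continuousOn
      obtain ⟨hqK, hqF⟩ := hq₀A
      have hθsI : θs ∈ Set.Icc (0:ℝ) π := hqK.1
      have htsI : ts ∈ Set.Icc (0:ℝ) t₀ := hqK.2
      have hbefore : ∀ q ∈ K, q.2 < ts →
          0 < Real.exp (-lam * q.2) * (h₂ q.1 q.2 - h₁ q.1 q.2) + ε * (q.2 + 1) := by
        intro q hq hlt
        by_contra hle
        push_neg at hle
        have : ts ≤ q.2 := isMinOn_iff.1 hq₀min q ⟨hq, hle⟩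
        linarith
      have hts0 : 0 < ts := by
        rcases lt_or_eq_of_le htsI.1 with h | h
        · exact h
        · exfalso
          have h' : ts = 0 := h.symm
          rw [h'] at hqF
        -- hqF : exp(-lam*0) * (h₂ θs 0 - h₁ θs 0) + ε * (0+1) ≤ 0
          have hini := hinit θs hθsI
          simp only [mul_zero, neg_zero, zero_add, Real.exp_zero, one_mul] at hqF
          nlinarith
      have hθs : θs ∈ Set.Ioo (0:ℝ) π := by
        have hEpos : 0 < Real.exp (-lam * ts) := Real.exp_pos _
        constructor
        · rcases lt_or_eq_of_le hθsI.1 with h | h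
          · exact h
          · exfalso
            have hge := (hedge (θs, ts) hqK (Or.inl h.symm)).1
            nlinarith [mul_nonneg hEpos.le hge, htsI.1]
        · rcases lt_or_eq_of_le hθsI.2 with h | h
          · exact h
          · exfalso
            have hge := (hedge (θs, ts) hqK (Or.inr h)).1
            nlinarith [mul_nonneg hEpos.le hge, htsI.1]
      have htsT : ts ∈ Set.Ioo (0:ℝ) T := ⟨hts0, lt_of_le_of_lt htsI.2 ht₀.2⟩
      haveI hnb : (𝓝[Set.Ioo (0:ℝ) ts] ts).NeBot :=
        mem_closure_iff_nhdsWithin_neBot.1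
          (by rw [closure_Ioo (ne_of_lt hts0)]; exact ⟨hts0.le, le_refl ts⟩)
      -- every slice at time ts is nonnegative, by taking limits from earlier times
      have hFslice0 : ∀ θ' ∈ Set.Icc (0:ℝ) π,
          0 ≤ Real.exp (-lam * ts) * (h₂ θ' ts - h₁ θ' ts) + ε * (ts + 1) := by
        intro θ' hθ'
        have hmap : Set.MapsTo (fun s : ℝ => ((θ', s) : ℝ × ℝ)) (Set.Ioo (0:ℝ) ts) K :=
          fun s hs => ⟨hθ', ⟨hs.1.le, le_trans hs.2.le htsI.2⟩⟩
        have hc : ContinuousWithinAt (fun q : ℝ × ℝ =>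
            Real.exp (-lam * q.2) * (h₂ q.1 q.2 - h₁ q.1 q.2) + ε * (q.2 + 1)) K (θ', ts) :=
          hFc _ ⟨hθ', htsI⟩
        have hin : ContinuousWithinAt (fun s : ℝ => ((θ', s) : ℝ × ℝ))
            (Set.Ioo (0:ℝ) ts) ts :=
          (continuous_const.prodMk continuous_id).continuousAt.continuousWithinAt
        have htend := hc.comp hin hmap
        refine ge_of_tendsto htend ?_
        filter_upwards [self_mem_nhdsWithin] with s hs
        exact (hbefore (θ', s) ⟨hθ', ⟨hs.1.le, le_trans hs.2.le htsI.2⟩⟩ hs.2).le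
      have hF0 : Real.exp (-lam * ts) * (h₂ θs ts - h₁ θs ts) + ε * (ts + 1) = 0 :=
        le_antisymm hqF (hFslice0 θs hθsI)
      have hEpos : 0 < Real.exp (-lam * ts) := Real.exp_pos _
      have hWs : h₂ θs ts - h₁ θs ts < 0 := by
        by_contra hge
        push_neg at hge
        nlinarith [mul_nonneg hEpos.le hge]
      -- spatial local minimum
      have hGloc : IsLocalMin (fun x => h₂ x ts - h₁ x ts) θs := by
        have hGmin : IsMinOn (fun x => h₂ x ts - h₁ x ts) (Set.Icc 0 π) θs := by
          refine isMinOn_iff.2 (fun θ' hθ' => ?_)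
          have h1 := hFslice0 θ' hθ'
          by_contra hlt
          push_neg at hlt
          nlinarith [mul_pos hEpos (sub_pos.2 hlt)]
        exact hGmin.isLocalMin (Icc_mem_nhds hθs.1 hθs.2)
      -- spatial regularity of sections
      have hg1 : ContDiffOn ℝ 2 (fun x => h₁ x ts) (Set.Ioo 0 π) := by
        have := hC2₁.comp ((contDiff_id.prodMk contDiff_const).contDiffOn)
          (fun x hx => Set.mk_mem_prod hx htsT)
        exact this
      have hg2 : ContDiffOn ℝ 2 (fun x => h₂ x ts) (Set.Ioo 0 π) := by
        have := hC2₂.comp ((contDiff_id.prodMk contDiff_const).contDiffOn)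
          (fun x hx => Set.mk_mem_prod hx htsT)
        exact this
      have hd1θ : DifferentiableAt ℝ (fun x => h₁ x ts) θs :=
        (hg1.contDiffAt (Ioo_mem_nhds hθs.1 hθs.2)).differentiableAt two_ne_zero
      have hd2θ : DifferentiableAt ℝ (fun x => h₂ x ts) θs :=
        (hg2.contDiffAt (Ioo_mem_nhds hθs.1 hθs.2)).differentiableAt two_ne_zero
      -- first derivatives agree
      have hBeq : deriv (fun x => h₂ x ts) θs = deriv (fun x => h₁ x ts) θs := by
        have hz := hGloc.deriv_eq_zero
        have hsub : deriv (fun x => h₂ x ts - h₁ x ts) θs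
            = deriv (fun x => h₂ x ts) θs - deriv (fun x => h₁ x ts) θs :=
          deriv_sub hd2θ hd1θ
        rw [hsub] at hz
        linarith
      -- second derivatives ordered
      have hdg1 : ContDiffOn ℝ 1 (deriv (fun x => h₁ x ts)) (Set.Ioo 0 π) :=
        hg1.deriv_of_isOpen isOpen_Ioo (by norm_num)
      have hdg2 : ContDiffOn ℝ 1 (deriv (fun x => h₂ x ts)) (Set.Ioo 0 π) :=
        hg2.deriv_of_isOpen isOpen_Ioo (by norm_num)
      have hd1θ' : DifferentiableAt ℝ (deriv (fun x => h₁ x ts)) θs :=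
        (hdg1.differentiableOn one_ne_zero).differentiableAt (Ioo_mem_nhds hθs.1 hθs.2)
      have hd2θ' : DifferentiableAt ℝ (deriv (fun x => h₂ x ts)) θs :=
        (hdg2.differentiableOn one_ne_zero).differentiableAt (Ioo_mem_nhds hθs.1 hθs.2)
      have hEqOn : Set.EqOn (deriv (fun x => h₂ x ts - h₁ x ts))
          (fun x => deriv (fun y => h₂ y ts) x - deriv (fun y => h₁ y ts) x)
          (Set.Ioo 0 π) := by
        intro x hx
        exact deriv_sub
          ((hg2.contDiffAt (Ioo_mem_nhds hx.1 hx.2)).differentiableAt two_ne_zero)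
          ((hg1.contDiffAt (Ioo_mem_nhds hx.1 hx.2)).differentiableAt two_ne_zero)
      have hevEq : deriv (fun x => h₂ x ts - h₁ x ts)
          =ᶠ[𝓝 θs] (fun x => deriv (fun y => h₂ y ts) x - deriv (fun y => h₁ y ts) x) :=
        hEqOn.eventuallyEq_of_mem (Ioo_mem_nhds hθs.1 hθs.2)
      have hdiffG2 : DifferentiableAt ℝ (deriv (fun x => h₂ x ts - h₁ x ts)) θs :=
        (Filter.EventuallyEq.differentiableAt_iff hevEq).2 (hd2θ'.sub hd1θ')
      have hdiffev : ∀ᶠ x in 𝓝 θs, DifferentiableAt ℝ (fun x' => h₂ x' ts - h₁ x' ts) x := by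
        filter_upwards [Ioo_mem_nhds hθs.1 hθs.2] with x hx
        exact ((hg2.contDiffAt (Ioo_mem_nhds hx.1 hx.2)).differentiableAt two_ne_zero).sub
          ((hg1.contDiffAt (Ioo_mem_nhds hx.1 hx.2)).differentiableAt two_ne_zero)
      have h2nd := aux_second_deriv_nonneg hdiffev hdiffG2 hGloc
      have hA2 : deriv (deriv (fun x => h₁ x ts)) θs ≤ deriv (deriv (fun x => h₂ x ts)) θs := by
        have he1 : deriv (deriv (fun x => h₂ x ts - h₁ x ts)) θs
            = deriv (fun x => deriv (fun y => h₂ y ts) x - deriv (fun y => h₁ y ts) x) θs :=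
          hevEq.deriv_eq
        have he2 : deriv (fun x => deriv (fun y => h₂ y ts) x - deriv (fun y => h₁ y ts) x) θs
            = deriv (deriv (fun x => h₂ x ts)) θs - deriv (deriv (fun x => h₁ x ts)) θs :=
          deriv_sub hd2θ' hd1θ'
        rw [he1, he2] at h2nd
        linarith
      -- time regularity of sections
      have hu1 : ContDiffOn ℝ 2 (fun s => h₁ θs s) (Set.Ioo 0 T) := by
        have := hC2₁.comp ((contDiff_const.prodMk contDiff_id).contDiffOn)
          (fun s hs => Set.mk_mem_prod hθs hs)
        exact this
      have hu2 : ContDiffOn ℝ 2 (fun s => h₂ θs s) (Set.Ioo 0 T) := by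
        have := hC2₂.comp ((contDiff_const.prodMk contDiff_id).contDiffOn)
          (fun s hs => Set.mk_mem_prod hθs hs)
        exact this
      have hd1t : DifferentiableAt ℝ (fun s => h₁ θs s) ts :=
        (hu1.contDiffAt (Ioo_mem_nhds htsT.1 htsT.2)).differentiableAt two_ne_zero
      have hd2t : DifferentiableAt ℝ (fun s => h₂ θs s) ts :=
        (hu2.contDiffAt (Ioo_mem_nhds htsT.1 htsT.2)).differentiableAt two_ne_zero
      -- time derivative of the penalised function is nonpositive at the touching point
      have hlin : HasDerivAt (fun s : ℝ => -lam * s) (-lam) ts := by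
        simpa using (hasDerivAt_id ts).const_mul (-lam)
      have hexp : HasDerivAt (fun s : ℝ => Real.exp (-lam * s))
          (Real.exp (-lam * ts) * (-lam)) ts := hlin.exp
      have husub : HasDerivAt (fun s => h₂ θs s - h₁ θs s)
          (deriv (fun s => h₂ θs s) ts - deriv (fun s => h₁ θs s) ts) ts :=
        (hd2t.hasDerivAt).sub (hd1t.hasDerivAt)
      have hlin2 : HasDerivAt (fun s : ℝ => ε * (s + 1)) ε ts := by
        simpa using ((hasDerivAt_id ts).add_const 1).const_mul ε
      have hψ := (hexp.mul husub).add hlin2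
      have hDle := aux_deriv_nonpos_left hψ
        (fun s hs => (hbefore (θs, s) ⟨hθsI, ⟨hs.1, le_trans hs.2.le htsI.2⟩⟩ hs.2).le)
        hF0 hts0
      -- the PDE and supersolution inequality at the touching point
      have hPDE1 := heq θs hθs ts htsT
      have hPDE2 := hineq θs hθs ts htsT
      have hsθ : 0 < Real.sin θs := Real.sin_pos_of_pos_of_lt_pi hθs.1 hθs.2
      have hs2 : 0 < Real.sin θs ^ 2 := by positivity
      have hid1 : Real.sin (2 * h₂ θs ts) - Real.sin (2 * h₁ θs ts)
          = 2 * Real.sin (h₂ θs ts - h₁ θs ts) * Real.cos (h₁ θs ts + h₂ θs ts) := by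
        rw [Real.sin_sub_sin,
          show (2 * h₂ θs ts - 2 * h₁ θs ts) / 2 = h₂ θs ts - h₁ θs ts by ring,
          show (2 * h₂ θs ts + 2 * h₁ θs ts) / 2 = h₁ θs ts + h₂ θs ts by ring]
      have hid2 : Real.sin (2 * h₂ θs ts - 2 * θs) - Real.sin (2 * h₁ θs ts - 2 * θs)
          = 2 * Real.sin (h₂ θs ts - h₁ θs ts)
            * Real.cos (h₁ θs ts + h₂ θs ts - 2 * θs) := by
        rw [Real.sin_sub_sin,
          show (2 * h₂ θs ts - 2 * θs - (2 * h₁ θs ts - 2 * θs)) / 2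
            = h₂ θs ts - h₁ θs ts by ring,
          show (2 * h₂ θs ts - 2 * θs + (2 * h₁ θs ts - 2 * θs)) / 2
            = h₁ θs ts + h₂ θs ts - 2 * θs by ring]
      have hbound : ∀ c : ℝ, Real.sin (h₂ θs ts - h₁ θs ts) * Real.cos c
          ≤ -(h₂ θs ts - h₁ θs ts) := by
        intro c
        calc Real.sin (h₂ θs ts - h₁ θs ts) * Real.cos c
            ≤ |Real.sin (h₂ θs ts - h₁ θs ts) * Real.cos c| := le_abs_self _
          _ = |Real.sin (h₂ θs ts - h₁ θs ts)| * |Real.cos c| := abs_mul _ _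
          _ ≤ |Real.sin (h₂ θs ts - h₁ θs ts)| * 1 :=
              mul_le_mul_of_nonneg_left (Real.abs_cos_le_one c) (abs_nonneg _)
          _ = |Real.sin (h₂ θs ts - h₁ θs ts)| := mul_one _
          _ ≤ |h₂ θs ts - h₁ θs ts| := Real.abs_sin_le_abs
          _ = -(h₂ θs ts - h₁ θs ts) := abs_of_neg hWs
      have hXdiv : Real.sin (2 * h₂ θs ts) / (2 * Real.sin θs ^ 2)
            - Real.sin (2 * h₁ θs ts) / (2 * Real.sin θs ^ 2)
          = (Real.sin (h₂ θs ts - h₁ θs ts) * Real.cos (h₁ θs ts + h₂ θs ts))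
            / Real.sin θs ^ 2 := by
        calc Real.sin (2 * h₂ θs ts) / (2 * Real.sin θs ^ 2)
              - Real.sin (2 * h₁ θs ts) / (2 * Real.sin θs ^ 2)
            = (Real.sin (2 * h₂ θs ts) - Real.sin (2 * h₁ θs ts))
              / (2 * Real.sin θs ^ 2) := by ring
          _ = (2 * Real.sin (h₂ θs ts - h₁ θs ts) * Real.cos (h₁ θs ts + h₂ θs ts))
              / (2 * Real.sin θs ^ 2) := by rw [hid1]
          _ = (Real.sin (h₂ θs ts - h₁ θs ts) * Real.cos (h₁ θs ts + h₂ θs ts))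
              / Real.sin θs ^ 2 := by
              field_simp
      have hYdiv : (κ / 2) * Real.sin (2 * h₂ θs ts - 2 * θs)
            - (κ / 2) * Real.sin (2 * h₁ θs ts - 2 * θs)
          = κ * (Real.sin (h₂ θs ts - h₁ θs ts)
            * Real.cos (h₁ θs ts + h₂ θs ts - 2 * θs)) := by
        calc (κ / 2) * Real.sin (2 * h₂ θs ts - 2 * θs)
              - (κ / 2) * Real.sin (2 * h₁ θs ts - 2 * θs)
            = (κ / 2) * (Real.sin (2 * h₂ θs ts - 2 * θs)
              - Real.sin (2 * h₁ θs ts - 2 * θs)) := by ring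
          _ = (κ / 2) * (2 * Real.sin (h₂ θs ts - h₁ θs ts)
              * Real.cos (h₁ θs ts + h₂ θs ts - 2 * θs)) := by rw [hid2]
          _ = κ * (Real.sin (h₂ θs ts - h₁ θs ts)
              * Real.cos (h₁ θs ts + h₂ θs ts - 2 * θs)) := by ring
      have hκle : κ * (Real.sin (h₂ θs ts - h₁ θs ts)
            * Real.cos (h₁ θs ts + h₂ θs ts - 2 * θs))
          ≤ κ * (-(h₂ θs ts - h₁ θs ts)) :=
        mul_le_mul_of_nonneg_left (hbound _) hκ.le
      have hB1 : (Real.cos θs / Real.sin θs) * deriv (fun x => h₂ x ts) θs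
          = (Real.cos θs / Real.sin θs) * deriv (fun x => h₁ x ts) θs := by rw [hBeq]
      -- core inequality
      have hcore : lam * (h₂ θs ts - h₁ θs ts)
          ≤ deriv (fun s => h₂ θs s) ts - deriv (fun s => h₁ θs s) ts := by
        by_cases hBmem : ((θs, ts) : ℝ × ℝ) ∈ B
        · have hlam1 : 1 / Real.sin θs ^ 2 + κ ≤ lam := hlamB (θs, ts) hBmem
          have hXle : (Real.sin (h₂ θs ts - h₁ θs ts) * Real.cos (h₁ θs ts + h₂ θs ts))
                / Real.sin θs ^ 2
              ≤ (-(h₂ θs ts - h₁ θs ts)) / Real.sin θs ^ 2 :=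
            (div_le_div_iff_of_pos_right hs2).2 (hbound _)
          have hlamu : lam * (h₂ θs ts - h₁ θs ts)
              ≤ (1 / Real.sin θs ^ 2 + κ) * (h₂ θs ts - h₁ θs ts) :=
            mul_le_mul_of_nonpos_right hlam1 hWs.le
          have hexpand : (1 / Real.sin θs ^ 2 + κ) * (h₂ θs ts - h₁ θs ts)
              = (h₂ θs ts - h₁ θs ts) / Real.sin θs ^ 2 + κ * (h₂ θs ts - h₁ θs ts) := by
            ring
          have hneg : (-(h₂ θs ts - h₁ θs ts)) / Real.sin θs ^ 2
              = -((h₂ θs ts - h₁ θs ts) / Real.sin θs ^ 2) := by ring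
          linarith [hPDE2, hPDE1, hA2, hB1, hXdiv, hXle, hYdiv, hκle]
        · have hprops : 0 < Real.cos (h₁ θs ts + h₂ θs ts)
              ∧ -1 < h₂ θs ts - h₁ θs ts := by
            by_contra hcon2
            apply hBmem
            refine ⟨hqK, hWs.le, ?_⟩
            push_neg at hcon2
            rcases le_or_gt (Real.cos (h₁ θs ts + h₂ θs ts)) 0 with hc | hc
            · exact Or.inl hc
            · exact Or.inr (by linarith [hcon2 hc])
          have hsinu : Real.sin (h₂ θs ts - h₁ θs ts) < 0 :=
            Real.sin_neg_of_neg_of_neg_pi_lt hWs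
              (by linarith [Real.pi_gt_three, hprops.2])
          have hCnum : Real.sin (h₂ θs ts - h₁ θs ts)
              * Real.cos (h₁ θs ts + h₂ θs ts) ≤ 0 :=
            mul_nonpos_iff.2 (Or.inr ⟨hsinu.le, hprops.1.le⟩)
          have hCle : (Real.sin (h₂ θs ts - h₁ θs ts)
                * Real.cos (h₁ θs ts + h₂ θs ts)) / Real.sin θs ^ 2 ≤ 0 :=
            div_nonpos_of_nonpos_of_nonneg hCnum hs2.le
          have hlamu : lam * (h₂ θs ts - h₁ θs ts) ≤ κ * (h₂ θs ts - h₁ θs ts) :=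
            mul_le_mul_of_nonpos_right hlamκ hWs.le
          linarith [hPDE2, hPDE1, hA2, hB1, hXdiv, hCle, hYdiv, hκle]
      -- final contradiction
      have hEc : Real.exp (-lam * ts) * (lam * (h₂ θs ts - h₁ θs ts))
          ≤ Real.exp (-lam * ts)
            * (deriv (fun s => h₂ θs s) ts - deriv (fun s => h₁ θs s) ts) :=
        mul_le_mul_of_nonneg_left hcore hEpos.le
      nlinarith [hDle, hEc, hε]
    -- conclude
    intro p hp
    by_contra hneg
    push_neg at hneg
    have hE : 0 < Real.exp (-lam * p.2) := Real.exp_pos _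
    have hp1 : (0:ℝ) < p.2 + 1 := by linarith [hp.2.1]
    set W := h₂ p.1 p.2 - h₁ p.1 p.2 with hW
    have hWneg : W < 0 := hneg
    have hε : 0 < Real.exp (-lam * p.2) * (-W) / (2 * (p.2 + 1)) :=
      div_pos (mul_pos hE (by linarith)) (by linarith)
    have := main _ hε p hp
    rw [← hW] at this
    have hcalc : Real.exp (-lam * p.2) * (-W) / (2 * (p.2 + 1)) * (p.2 + 1)
        = Real.exp (-lam * p.2) * (-W) / 2 := by
      field_simp
    rw [hcalc] at this
    nlinarith
  intro θ hθ t ht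
  have := key t ht (θ, t) ⟨hθ, le_of_lt ht.1, le_refl t⟩
  simpa using this
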